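/- Let N ≥ 2, 0 < k < N, and 1 ≤ j. The number of paths w : Fin N → Bool with w(0) = false, w(N−1) = false, exactly k visits to S1, and exactly j ascents equals C(k−1, j−1)·C(N−k−1, j). (Such a path consists of j maximal blocks of trues and j+1 maximal blocks of falses; distributing k trues over j nonempty blocks and N−k falses over j+1 nonempty blocks gives the two weak-composition counts.) -/

import Mathlib

open Finset

/-- Transition probability of the two-state chain: `false` is S0, `true` is S1. -/
def mcStep (p00 p01 p10 p11 : ℝ) : Bool → Bool → ℝ
  | false, false => p00
  | false, true  => p01
  | true,  false => p10
  | true,  true  => p11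

/-- Weight of a path `w : Fin N → Bool`: product over `i = 0, …, N-2` of the
transition probability from `w i` to `w (i+1)`; equals `1` when `N = 1`. -/
def pathWeight (p00 p01 p10 p11 : ℝ) {N : ℕ} (w : Fin N → Bool) : ℝ :=
  ∏ i : Fin (N - 1),
    mcStep p00 p01 p10 p11
      (w ⟨i.val, by have := i.isLt; omega⟩)
      (w ⟨i.val + 1, by have := i.isLt; omega⟩)

/-- Number of visits to S1 (i.e. `true`) of a path. -/
def visitsS1 {N : ℕ} (w : Fin N → Bool) : ℕ :=
  (Finset.univ.filter fun i : Fin N => w i = true).card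

/-- Number of descents (indices `i ≤ N-2` with `w i = true` and `w (i+1) = false`). -/
def descents {N : ℕ} (w : Fin N → Bool) : ℕ :=
  (Finset.univ.filter fun i : Fin (N - 1) =>
    w ⟨i.val, by have := i.isLt; omega⟩ = true ∧
    w ⟨i.val + 1, by have := i.isLt; omega⟩ = false).card

/-- Number of ascents (indices `i ≤ N-2` with `w i = false` and `w (i+1) = true`). -/
def ascents {N : ℕ} (w : Fin N → Bool) : ℕ :=
  (Finset.univ.filter fun i : Fin (N - 1) =>
    w ⟨i.val, by have := i.isLt; omega⟩ = false ∧
    w ⟨i.val + 1, by have := i.isLt; omega⟩ = true).card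

lemma ascents_eq {n : ℕ} (w : Fin (n+1) → Bool) :
    ascents w = (Finset.univ.filter fun i : Fin n =>
      w i.castSucc = false ∧ w i.succ = true).card := rfl

lemma visits_snoc {n : ℕ} (w : Fin (n+2) → Bool) :
    visitsS1 w = visitsS1 (fun i : Fin (n+1) => w i.castSucc)
      + (if w (Fin.last (n+1)) = true then 1 else 0) := by
  unfold visitsS1
  rw [Finset.card_filter, Finset.card_filter, Fin.sum_univ_castSucc]

lemma ascents_snoc {n : ℕ} (w : Fin (n+2) → Bool) :
    ascents w = ascents (fun i : Fin (n+1) => w i.castSucc)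
      + (if w ((Fin.last n).castSucc) = false ∧ w (Fin.last (n+1)) = true then 1 else 0) := by
  rw [ascents_eq, ascents_eq]
  rw [Finset.card_filter, Finset.card_filter, Fin.sum_univ_castSucc]
  simp [Fin.succ_castSucc, -Fin.castSucc_succ]

def cnt (n k j : ℕ) (b : Bool) : ℕ :=
  (univ.filter fun w : Fin (n+1) → Bool =>
    w 0 = false ∧ w (Fin.last n) = b ∧ visitsS1 w = k ∧ ascents w = j).card

lemma cnt_succ (n k j : ℕ) (b : Bool) :
    cnt (n+1) k j b =
    ((univ.filter fun v : Fin (n+1) → Bool =>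
      v 0 = false ∧ visitsS1 v + (if b = true then 1 else 0) = k ∧
      ascents v + (if v (Fin.last n) = false ∧ b = true then 1 else 0) = j)).card := by
  apply Finset.card_bij (fun w _ => fun i : Fin (n+1) => w i.castSucc)
  · intro w hw
    simp only [Finset.mem_filter, Finset.mem_univ, true_and] at hw ⊢
    obtain ⟨h0, hl, hv, ha⟩ := hw
    refine ⟨by rw [Fin.castSucc_zero]; exact h0, ?_, ?_⟩
    · rw [← hv, visits_snoc w, hl]
    · rw [← ha, ascents_snoc w, hl]
  · intro w1 h1 w2 h2 h
    simp only [Finset.mem_filter, Finset.mem_univ, true_and] at h1 h2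
    funext i
    induction i using Fin.lastCases with
    | last => rw [h1.2.1, h2.2.1]
    | cast i => exact congrFun h i
  · intro v hv
    simp only [Finset.mem_filter, Finset.mem_univ, true_and] at hv
    obtain ⟨h0, hvk, haj⟩ := hv
    refine ⟨(Fin.snoc v b : Fin (n+2) → Bool), ?_, ?_⟩
    · have hpre : (fun i : Fin (n+1) => (Fin.snoc v b : Fin (n+2) → Bool) i.castSucc) = v := by
        funext i; simp [Fin.snoc_castSucc]
      simp only [Finset.mem_filter, Finset.mem_univ, true_and]
      refine ⟨?_, ?_, ?_, ?_⟩
      · rw [← Fin.castSucc_zero]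
        rw [Fin.snoc_castSucc]; exact h0
      · exact Fin.snoc_last _ _
      · rw [visits_snoc, hpre, Fin.snoc_last]; exact hvk
      · rw [ascents_snoc, hpre, Fin.snoc_last, Fin.snoc_castSucc]; exact haj
    · funext i; simp [Fin.snoc_castSucc]

lemma card_split (n : ℕ) (P : (Fin (n+1) → Bool) → Prop) [DecidablePred P] :
    (univ.filter P).card =
    (univ.filter fun v => P v ∧ v (Fin.last n) = true).card +
    (univ.filter fun v => P v ∧ v (Fin.last n) = false).card := by
  rw [← Finset.filter_filter, ← Finset.filter_filter]
  rw [← Finset.card_filter_add_card_filter_not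
    (s := univ.filter P) (p := fun v => v (Fin.last n) = true)]
  congr 2
  ext v
  simp

lemma rec_false (n k j : ℕ) :
    cnt (n+1) k j false = cnt n k j true + cnt n k j false := by
  rw [cnt_succ]
  rw [card_split n (fun v => v 0 = false ∧
      visitsS1 v + (if false = true then 1 else 0) = k ∧
      ascents v + (if v (Fin.last n) = false ∧ false = true then 1 else 0) = j)]
  unfold cnt
  congr 2 <;> · ext v; simp; tauto

lemma rec_true_succ (n k j : ℕ) :
    cnt (n+1) (k+1) (j+1) true = cnt n k (j+1) true + cnt n k j false := by
  rw [cnt_succ]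
  rw [card_split n (fun v => v 0 = false ∧
      visitsS1 v + (if true = true then 1 else 0) = k + 1 ∧
      ascents v + (if v (Fin.last n) = false ∧ true = true then 1 else 0) = j + 1)]
  unfold cnt
  congr 2
  · ext v
    by_cases h : v (Fin.last n) = true <;> simp [h] <;> tauto
  · ext v
    by_cases h : v (Fin.last n) = false <;> simp [h] <;> tauto

lemma rec_true_zero (n k : ℕ) :
    cnt (n+1) (k+1) 0 true = cnt n k 0 true := by
  rw [cnt_succ]
  unfold cnt
  congr 1
  ext v
  by_cases h : v (Fin.last n) = true <;> simp [h] <;> tauto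

lemma cnt0_false (k j : ℕ) : cnt 0 k j false = if k = 0 ∧ j = 0 then 1 else 0 := by
  have h1 : ∀ w : Fin 1 → Bool,
      (w 0 = false ∧ w (Fin.last 0) = false ∧ visitsS1 w = k ∧ ascents w = j) ↔
      (w = (fun _ => false) ∧ k = 0 ∧ j = 0) := by
    intro w
    constructor
    · rintro ⟨h0, -, hv, ha⟩
      have hw : w = fun _ => false := funext fun i => by
        have : i = 0 := Fin.eq_zero i
        rw [this]; exact h0
      subst hw
      refine ⟨rfl, ?_, ?_⟩
      · rw [← hv]; decide
      · rw [← ha]; decide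
    · rintro ⟨rfl, rfl, rfl⟩
      exact ⟨rfl, rfl, by decide, by decide⟩
  unfold cnt
  split_ifs with h
  · rw [show (univ.filter fun w : Fin 1 → Bool =>
        w 0 = false ∧ w (Fin.last 0) = false ∧ visitsS1 w = k ∧ ascents w = j)
        = {fun _ => false} from by
          ext w
          rw [Finset.mem_filter, Finset.mem_singleton, h1 w]
          simp [h]]
    exact Finset.card_singleton _
  · rw [show (univ.filter fun w : Fin 1 → Bool =>
        w 0 = false ∧ w (Fin.last 0) = false ∧ visitsS1 w = k ∧ ascents w = j)
        = ∅ from by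
          ext w
          rw [Finset.mem_filter, h1 w]
          simp only [Finset.notMem_empty, iff_false]
          tauto]
    exact Finset.card_empty

lemma cnt0_true (k j : ℕ) : cnt 0 k j true = 0 := by
  unfold cnt
  rw [Finset.card_eq_zero, Finset.filter_eq_empty_iff]
  rintro w - ⟨h0, hl, -, -⟩
  have : (Fin.last 0 : Fin 1) = 0 := Fin.eq_zero _
  rw [this, h0] at hl
  exact Bool.false_ne_true hl

lemma cnt_visits0_true (n j : ℕ) : cnt n 0 j true = 0 := by
  unfold cnt
  rw [Finset.card_eq_zero, Finset.filter_eq_empty_iff]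
  rintro w - ⟨h0, hl, hv, -⟩
  unfold visitsS1 at hv
  rw [Finset.card_eq_zero, Finset.eq_empty_iff_forall_notMem] at hv
  exact hv (Fin.last n) (by simp [hl])

lemma cnt_visits0_false (n j : ℕ) : cnt n 0 j false = if j = 0 then 1 else 0 := by
  induction n with
  | zero => rw [cnt0_false]; by_cases h : j = 0 <;> simp [h]
  | succ n ih => rw [rec_false, cnt_visits0_true, ih, Nat.zero_add]

lemma cnt_asc0_true (n : ℕ) : ∀ k, cnt n k 0 true = 0 := by
  induction n with
  | zero => intro k; exact cnt0_true k 0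
  | succ n ih =>
    intro k
    cases k with
    | zero => exact cnt_visits0_true _ _
    | succ k => rw [rec_true_zero, ih]

lemma cnt_asc0_false (n : ℕ) : ∀ k, cnt n (k+1) 0 false = 0 := by
  induction n with
  | zero => intro k; rw [cnt0_false]; simp
  | succ n ih => intro k; rw [rec_false, cnt_asc0_true, ih]

lemma cnt_big_true (n k j : ℕ) (h : n ≤ k) : cnt n (k+1) j true = 0 := by
  unfold cnt
  rw [Finset.card_eq_zero, Finset.filter_eq_empty_iff]
  rintro w - ⟨h0, -, hv, -⟩
  have hsub : (univ.filter fun i : Fin (n+1) => w i = true) ⊆ univ.erase 0 := by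
    intro i hi
    simp only [Finset.mem_filter, Finset.mem_univ, true_and] at hi
    rw [Finset.mem_erase]
    refine ⟨?_, Finset.mem_univ _⟩
    rintro rfl
    rw [h0] at hi
    exact Bool.false_ne_true hi
  have := Finset.card_le_card hsub
  rw [Finset.card_erase_of_mem (Finset.mem_univ _), Finset.card_univ] at this
  unfold visitsS1 at hv
  simp only [Fintype.card_fin] at this
  omega

lemma cnt_closed : ∀ n : ℕ,
    (∀ k j, cnt n (k+1) (j+1) false = Nat.choose k j * Nat.choose (n - k - 1) (j+1)) ∧
    (∀ k j, k < n → cnt n (k+1) (j+1) true = Nat.choose k j * Nat.choose (n - k - 1) j) := by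
  intro n
  induction n with
  | zero =>
    constructor
    · intro k j
      rw [cnt0_false]
      simp [Nat.choose_zero_succ]
    · intro k j h; omega
  | succ n ih =>
    obtain ⟨ihF, ihG⟩ := ih
    constructor
    · intro k j
      rw [rec_false, ihF k j]
      by_cases hk : k < n
      · rw [ihG k j hk]
        rw [show n + 1 - k - 1 = (n - k - 1) + 1 from by omega, Nat.choose_succ_succ]
        ring
      · rw [cnt_big_true n k (j+1) (by omega)]
        rw [show n + 1 - k - 1 = 0 from by omega, show n - k - 1 = 0 from by omega]
        simp [Nat.choose_zero_succ]
    · intro k j hk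
      cases k with
      | zero =>
        rw [rec_true_succ, cnt_visits0_true, cnt_visits0_false]
        rw [show n + 1 - 0 - 1 = n from by omega]
        cases j with
        | zero => simp
        | succ j => simp [Nat.choose_zero_succ]
      | succ k =>
        have hk' : k < n := by omega
        rw [rec_true_succ, ihG k j hk']
        rw [show n + 1 - (k+1) - 1 = n - k - 1 from by omega]
        cases j with
        | zero => rw [cnt_asc0_false]; simp
        | succ j =>
          rw [ihF k j, Nat.choose_succ_succ k j]
          ring

theorem stmt11 (N k j : ℕ) (hN : 2 ≤ N) (hk0 : 0 < k) (hkN : k < N) (hj : 1 ≤ j) :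
    (Finset.univ.filter (fun w : Fin N → Bool =>
        w ⟨0, by omega⟩ = false ∧ w ⟨N - 1, by omega⟩ = false ∧
        visitsS1 w = k ∧ ascents w = j)).card =
    Nat.choose (k - 1) (j - 1) * Nat.choose (N - k - 1) j := by
  obtain ⟨n, rfl⟩ : ∃ n, N = n + 1 := ⟨N - 1, by omega⟩
  obtain ⟨k', rfl⟩ : ∃ k', k = k' + 1 := ⟨k - 1, by omega⟩
  obtain ⟨j', rfl⟩ : ∃ j', j = j' + 1 := ⟨j - 1, by omega⟩
  have harith : n + 1 - (k' + 1) - 1 = n - k' - 1 := by omega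
  have e0 : (⟨0, by omega⟩ : Fin (n+1)) = 0 := by
    apply Fin.ext; simp
  have el : (⟨n + 1 - 1, by omega⟩ : Fin (n+1)) = Fin.last n := by
    apply Fin.ext; simp [Fin.last]
  simp only [e0, el]
  have h := (cnt_closed n).1 k' j'
  unfold cnt at h
  simp only [Nat.add_sub_cancel, harith]
  exact h
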